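/- Let F be a factorization forest of a word w. Every iterable node I of F is a descendant of a middle child of exactly one basis of F, i.e. there is a unique idempotent node B in the dependency of the root such that I is a descendant of a middle child of B. -/
import Mathlib


inductive FForest (A : Type) : Type
  | leaf (a : A) : FForest A
  | node (children : List (FForest A)) : FForest A

namespace FForest

variable {A : Type} {M : Type} [Monoid M]

def wordOf : FForest A → List A
  | .leaf a => [a]
  | .node l => (l.attach.map (fun x => wordOf x.1)).flatten
decreasing_by simp only [FForest.node.sizeOf_spec]; have := List.sizeOf_lt_of_mem x.2; omega

def height : FForest A → ℕ
  | .leaf _ => 1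
  | .node l => 1 + (l.attach.map (fun x => height x.1)).foldr max 0
decreasing_by simp only [FForest.node.sizeOf_spec]; have := List.sizeOf_lt_of_mem x.2; omega

def prodOf (μ : A → M) (F : FForest A) : M := ((wordOf F).map μ).prod

inductive Valid (μ : A → M) : FForest A → Prop
  | leaf (a : A) : Valid μ (.leaf a)
  | binary (F₁ F₂ : FForest A) : Valid μ F₁ → Valid μ F₂ → Valid μ (.node [F₁, F₂])
  | idem (l : List (FForest A)) (e : M) : 3 ≤ l.length → (∀ F ∈ l, Valid μ F) →
      e * e = e → (∀ F ∈ l, prodOf μ F = e) → Valid μ (.node l)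

def subtreeAt : FForest A → List ℕ → Option (FForest A)
  | F, [] => some F
  | .leaf _, _ :: _ => none
  | .node l, i :: p =>
      match l[i]? with
      | some c => subtreeAt c p
      | none => none
termination_by F p => p.length

def offsetAt : FForest A → List ℕ → ℕ
  | _, [] => 0
  | .leaf _, _ :: _ => 0
  | .node l, i :: p =>
      ((l.take i).map (fun c => (wordOf c).length)).sum +
      (match l[i]? with
       | some c => offsetAt c p
       | none => 0)
termination_by F p => p.length

inductive DepPath : FForest A → List ℕ → Prop
  | nil (F : FForest A) : DepPath F []
  | cons (l : List (FForest A)) (i : ℕ) (p : List ℕ) (hi : i < l.length)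
      (hd : i = 0 ∨ i = l.length - 1) (h : DepPath l[i] p) : DepPath (.node l) (i :: p)

def IsPath (F : FForest A) (p : List ℕ) : Prop := (subtreeAt F p).isSome

def IterPath (F : FForest A) (p : List ℕ) : Prop :=
  ∃ q i l, p = q ++ [i] ∧ subtreeAt F q = some (.node l) ∧ 1 ≤ i ∧ i + 2 ≤ l.length

def PartPath (F : FForest A) (p : List ℕ) : Prop := p = [] ∨ IterPath F p

def depOf (F : FForest A) (p : List ℕ) : Set (List ℕ) :=
  {r | ∃ q I, subtreeAt F p = some I ∧ DepPath I q ∧ r = p ++ q}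

def frSet (F : FForest A) (p : List ℕ) : Set ℕ :=
  {j | ∃ q I a, subtreeAt F p = some I ∧ DepPath I q ∧
        subtreeAt F (p ++ q) = some (.leaf a) ∧ j = offsetAt F (p ++ q)}

mutual
def frWord : FForest A → List A
  | .leaf a => [a]
  | .node [] => []
  | .node (f :: rest) => frWord f ++ frWordLast rest
def frWordLast : List (FForest A) → List A
  | [] => []
  | [g] => frWord g
  | _ :: g :: rest => frWordLast (g :: rest)
end

mutual
def frList : FForest A → List ℕ
  | .leaf _ => [0]
  | .node [] => []
  | .node (f :: rest) => frList f ++ (frListLast rest).map (· + (wordOf f).length)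
def frListLast : List (FForest A) → List ℕ
  | [] => []
  | [g] => frList g
  | g :: rest => (frListLast rest).map (· + (wordOf g).length)
end

end FForest


/-- `b` is a basis of `F` (w.r.t. `μ`): an idempotent node belonging to the
dependency of the root. -/
def FForest.IsBasis {A M : Type} [Monoid M] (μ : A → M) (F : FForest A)
    (b : List ℕ) : Prop :=
  FForest.DepPath F b ∧ ∃ (l : List (FForest A)) (e : M),
    FForest.subtreeAt F b = some (.node l) ∧ 3 ≤ l.length ∧
    e * e = e ∧ ∀ c ∈ l, FForest.prodOf μ c = e

namespace FForest

variable {A M : Type} [Monoid M]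

lemma mem_of_getElem? {l : List (FForest A)} {j : ℕ} {c : FForest A}
    (h : l[j]? = some c) : c ∈ l := by
  obtain ⟨hlt, heq⟩ := List.getElem?_eq_some_iff.mp h
  exact heq ▸ l.getElem_mem hlt

lemma valid_children {μ : A → M} {l : List (FForest A)}
    (h : Valid μ (.node l)) : ∀ c ∈ l, Valid μ c := by
  cases h with
  | binary F₁ F₂ h1 h2 =>
    intro c hc
    simp only [List.mem_cons, List.not_mem_nil, or_false] at hc
    rcases hc with rfl | rfl <;> assumption
  | idem l e h1 h2 h3 h4 => exact h2

lemma valid_idem {μ : A → M} {l : List (FForest A)}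
    (h : Valid μ (.node l)) (hlen : 3 ≤ l.length) :
    ∃ e : M, e * e = e ∧ ∀ c ∈ l, prodOf μ c = e := by
  cases h with
  | binary F₁ F₂ h1 h2 => simp at hlen
  | idem l e hlen2 hv he hprod => exact ⟨e, he, hprod⟩

lemma subtreeAt_nil (F : FForest A) : subtreeAt F [] = some F := by
  rw [subtreeAt]

lemma subtreeAt_cons {l : List (FForest A)} {j : ℕ} {c : FForest A}
    (hc : l[j]? = some c) (p : List ℕ) :
    subtreeAt (.node l) (j :: p) = subtreeAt c p := by
  rw [subtreeAt, hc]

lemma valid_subtreeAt (μ : A → M) : ∀ (p : List ℕ) (F G : FForest A),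
    Valid μ F → subtreeAt F p = some G → Valid μ G := by
  intro p
  induction p with
  | nil => intro F G hF h; rw [subtreeAt_nil] at h; exact (Option.some_injective _ h) ▸ hF
  | cons j p' ih =>
    intro F G hF h
    cases F with
    | leaf a => simp [subtreeAt] at h
    | node l =>
      rw [subtreeAt] at h
      cases hc : l[j]? with
      | none => rw [hc] at h; simp at h
      | some c =>
        rw [hc] at h
        exact ih c G (valid_children hF c (mem_of_getElem? hc)) h

lemma depPath_split : ∀ (b r : List ℕ) (F : FForest A), DepPath F (b ++ r) →
    ∃ G, subtreeAt F b = some G ∧ DepPath G r := by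
  intro b
  induction b with
  | nil => intro r F h; exact ⟨F, subtreeAt_nil F, h⟩
  | cons j b' ih =>
    intro r F h
    cases h with
    | cons l i p hi hd h =>
      obtain ⟨G, h1, h2⟩ := ih r _ h
      exact ⟨G, by rw [subtreeAt_cons (List.getElem?_eq_getElem hi)]; exact h1, h2⟩

lemma no_deviate (b t : List ℕ) (i : ℕ) (l : List (FForest A)) (F : FForest A)
    (hs : subtreeAt F b = some (.node l)) (h1 : 1 ≤ i) (h2 : i + 2 ≤ l.length)
    (hd : DepPath F (b ++ i :: t)) : False := by
  obtain ⟨G, hG1, hG2⟩ := depPath_split b (i :: t) F hd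
  rw [hs] at hG1
  obtain rfl : FForest.node l = G := Option.some_injective _ hG1
  cases hG2 with
  | cons l i p hi hd h => omega

lemma exists_basis (μ : A → M) : ∀ (p : List ℕ) (F : FForest A), Valid μ F → IterPath F p →
    ∃ b i q l, DepPath F b ∧ subtreeAt F b = some (.node l) ∧
      (∃ e : M, 3 ≤ l.length ∧ e * e = e ∧ ∀ c ∈ l, prodOf μ c = e) ∧
      1 ≤ i ∧ i + 2 ≤ l.length ∧ p = b ++ i :: q := by
  intro p
  induction p with
  | nil =>
    rintro F hF ⟨q, i, l, hp, _⟩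
    simp at hp
  | cons j p' ih =>
    rintro F hF ⟨q, i, l, hp, hsub, hi1, hi2⟩
    cases q with
    | nil =>
      simp at hp
      obtain ⟨rfl, rfl⟩ := hp
      rw [subtreeAt_nil] at hsub
      obtain rfl : F = FForest.node l := Option.some_injective _ hsub
      have hlen : 3 ≤ l.length := by omega
      obtain ⟨e, he, hprod⟩ := valid_idem hF hlen
      exact ⟨[], j, [], l, DepPath.nil _, subtreeAt_nil _,
        ⟨e, hlen, he, hprod⟩, hi1, hi2, rfl⟩
    | cons j' q'' =>
      simp at hp
      obtain ⟨rfl, rfl⟩ := hp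
      cases F with
      | leaf a => simp [subtreeAt] at hsub
      | node l0 =>
        rw [subtreeAt] at hsub
        cases hc : l0[j]? with
        | none => rw [hc] at hsub; simp at hsub
        | some c =>
          rw [hc] at hsub
          have hsub' : subtreeAt c q'' = some (.node l) := hsub
          have hjlt : j < l0.length := (List.getElem?_eq_some_iff.mp hc).1
          have hjc : l0[j] = c := (List.getElem?_eq_some_iff.mp hc).2
          by_cases hj : j = 0 ∨ j = l0.length - 1
          · have hvc : Valid μ c := valid_children hF c (mem_of_getElem? hc)
            obtain ⟨b', i', q', l', hd', hs', hidem', hi1', hi2', hpeq'⟩ :=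
              ih c hvc ⟨q'', i, l, rfl, hsub', hi1, hi2⟩
            refine ⟨j :: b', i', q', l', ?_, ?_, hidem', hi1', hi2', by simp [hpeq']⟩
            · exact DepPath.cons l0 j b' hjlt hj (hjc ▸ hd')
            · rw [subtreeAt_cons hc]; exact hs'
          · push_neg at hj
            have hj1 : 1 ≤ j := by omega
            have hj2 : j + 2 ≤ l0.length := by omega
            have hlen : 3 ≤ l0.length := by omega
            obtain ⟨e, he, hprod⟩ := valid_idem hF hlen
            exact ⟨[], j, q'' ++ [i], l0, DepPath.nil _, subtreeAt_nil _,
              ⟨e, hlen, he, hprod⟩, hj1, hj2, rfl⟩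

end FForest
theorem iterable_unique_basis {A M : Type} [Monoid M] (μ : A → M) (F : FForest A)
    (hF : FForest.Valid μ F) (p : List ℕ) (hp : FForest.IterPath F p) :
    ∃! b : List ℕ, FForest.IsBasis μ F b ∧
      ∃ (i : ℕ) (q : List ℕ) (l : List (FForest A)),
        FForest.subtreeAt F b = some (.node l) ∧ 1 ≤ i ∧ i + 2 ≤ l.length ∧
        p = b ++ i :: q := by
  obtain ⟨b, i, q, l, hd, hs, ⟨e, hlen, he, hprod⟩, hi1, hi2, hpeq⟩ :=
    FForest.exists_basis μ p F hF hp
  refine ⟨b, ⟨⟨hd, l, e, hs, hlen, he, hprod⟩, i, q, l, hs, hi1, hi2, hpeq⟩, ?_⟩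
  rintro y ⟨⟨hdy, _⟩, iy, qy, ly, hsy, hiy1, hiy2, hpeqy⟩
  by_contra hne
  have hyb : y <+: p := ⟨iy :: qy, hpeqy.symm⟩
  have hbb : b <+: p := ⟨i :: q, hpeq.symm⟩
  rcases List.prefix_or_prefix_of_prefix hyb hbb with h | h
  · obtain ⟨t, rfl⟩ := h
    cases t with
    | nil => simp at hne
    | cons x t' =>
      rw [hpeqy, List.append_assoc] at hpeq
      have := List.append_cancel_left hpeq
      obtain ⟨rfl, _⟩ : iy = x ∧ qy = t' ++ i :: q := by
        constructor <;> [exact (List.cons.injEq _ _ _ _ ▸ this).1;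
          exact (List.cons.injEq _ _ _ _ ▸ this).2]
      exact FForest.no_deviate y t' iy ly F hsy hiy1 hiy2 hd
  · obtain ⟨t, rfl⟩ := h
    cases t with
    | nil => simp at hne
    | cons x t' =>
      rw [hpeq, List.append_assoc] at hpeqy
      have := List.append_cancel_left hpeqy
      obtain ⟨rfl, _⟩ : i = x ∧ q = t' ++ iy :: qy := by
        constructor <;> [exact (List.cons.injEq _ _ _ _ ▸ this).1;
          exact (List.cons.injEq _ _ _ _ ▸ this).2]
      exact FForest.no_deviate b t' i l F hs hi1 hi2 hdy
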